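/- If f(z) = ∑_{n≥0} a_n z^n is an entire power series in the class K (radius of convergence R = ∞), then sup_{t>0} σ_f²(t) ≥ gap(f)²/4 (in particular sup_{t>0} σ_f²(t) ≥ 1/4). If, moreover, f is transcendental (not a polynomial), then limsup_{t→∞} σ_f²(t) ≥ gap̄(f)²/4 (in particular limsup_{t→∞} σ_f²(t) ≥ 1/4). -/

import Mathlib

open Filter Topology MeasureTheory
open scoped ENNReal NNReal Classical

noncomputable section

/-- `psum a t = ∑ aₙ tⁿ`, the value `f(t)` of the power series with coefficients `a`. -/
def psum (a : ℕ → ℝ) (t : ℝ) : ℝ := ∑' n : ℕ, a n * t ^ n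

/-- The mean `m_f(t)` of the Khinchin family of the power series with coefficients `a`. -/
def meanK (a : ℕ → ℝ) (t : ℝ) : ℝ :=
  (∑' n : ℕ, (n : ℝ) * a n * t ^ n) / ∑' n : ℕ, a n * t ^ n

/-- The variance `σ_f²(t)` of the Khinchin family. -/
def varK (a : ℕ → ℝ) (t : ℝ) : ℝ :=
  (∑' n : ℕ, (n : ℝ) ^ 2 * a n * t ^ n) / (∑' n : ℕ, a n * t ^ n) - meanK a t ^ 2

/-- The standard deviation `σ_f(t)` of the Khinchin family. -/
def sdK (a : ℕ → ℝ) (t : ℝ) : ℝ := Real.sqrt (varK a t)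

/-- The moment `E(X_t^p)` of real exponent `p` of the Khinchin family. -/
def momK (a : ℕ → ℝ) (p : ℝ) (t : ℝ) : ℝ :=
  (∑' n : ℕ, (n : ℝ) ^ p * a n * t ^ n) / ∑' n : ℕ, a n * t ^ n

/-- The filter of `t ↑ R`: `atTop` when `R = ∞`, and `𝓝[<] R` when `R < ∞`. -/
def nhdsUpto (R : ℝ≥0∞) : Filter ℝ :=
  if R = ⊤ then atTop else nhdsWithin R.toReal (Set.Iio R.toReal)

set_option maxHeartbeats 1000000

namespace Stmt1Aux

variable {a : ℕ → ℝ}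

lemma nat_le_two_pow_pow (k n : ℕ) : ((n:ℝ))^k ≤ ((2:ℝ)^k)^n := by
  have h1 : (n:ℝ) ≤ 2^n := by exact_mod_cast (Nat.lt_two_pow_self (n := n)).le
  calc ((n:ℝ))^k ≤ ((2:ℝ)^n)^k := pow_le_pow_left₀ (Nat.cast_nonneg n) h1 k
    _ = ((2:ℝ)^k)^n := by rw [← pow_mul, ← pow_mul, Nat.mul_comm]

lemma summable_aux (hpos : ∀ n, 0 ≤ a n) (hconv : ∀ t : ℝ, Summable fun n : ℕ => a n * t ^ n)
    (k : ℕ) {t : ℝ} (ht : 0 ≤ t) : Summable fun n : ℕ => (n:ℝ)^k * a n * t^n := by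
  refine Summable.of_nonneg_of_le (fun n => mul_nonneg (mul_nonneg (by positivity) (hpos n)) (pow_nonneg ht n)) (fun n => ?_) (hconv ((2:ℝ)^k * t))
  have : a n * ((2:ℝ)^k * t)^n = ((2:ℝ)^k)^n * a n * t^n := by rw [mul_pow]; ring
  rw [this]
  have h2 : (n:ℝ)^k * (a n * t^n) ≤ ((2:ℝ)^k)^n * (a n * t^n) :=
    mul_le_mul_of_nonneg_right (nat_le_two_pow_pow k n) (mul_nonneg (hpos n) (pow_nonneg ht n))
  calc (n:ℝ)^k * a n * t^n = (n:ℝ)^k * (a n * t^n) := by ring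
    _ ≤ ((2:ℝ)^k)^n * (a n * t^n) := h2
    _ = ((2:ℝ)^k)^n * a n * t^n := by ring

lemma summable1 (hpos : ∀ n, 0 ≤ a n) (hconv : ∀ t : ℝ, Summable fun n : ℕ => a n * t ^ n)
    {t : ℝ} (ht : 0 ≤ t) : Summable fun n : ℕ => (n:ℝ) * a n * t^n := by
  simpa using summable_aux hpos hconv 1 ht

lemma summable2 (hpos : ∀ n, 0 ≤ a n) (hconv : ∀ t : ℝ, Summable fun n : ℕ => a n * t ^ n)
    {t : ℝ} (ht : 0 ≤ t) : Summable fun n : ℕ => (n:ℝ)^2 * a n * t^n :=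
  summable_aux hpos hconv 2 ht

lemma a0_le_psum (hpos : ∀ n, 0 ≤ a n) (hconv : ∀ t : ℝ, Summable fun n : ℕ => a n * t ^ n)
    {t : ℝ} (ht : 0 ≤ t) : a 0 ≤ ∑' n : ℕ, a n * t^n := by
  have := Summable.le_tsum (hconv t) 0 (fun j _ => mul_nonneg (hpos j) (pow_nonneg ht j))
  simpa using this

lemma psum_pos (hpos : ∀ n, 0 ≤ a n) (ha0 : 0 < a 0)
    (hconv : ∀ t : ℝ, Summable fun n : ℕ => a n * t ^ n)
    {t : ℝ} (ht : 0 ≤ t) : 0 < ∑' n : ℕ, a n * t^n :=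
  lt_of_lt_of_le ha0 (a0_le_psum hpos hconv ht)

lemma contOn_tsum_pow {g : ℕ → ℝ} (hg : ∀ n, 0 ≤ g n) {T : ℝ}
    (hT : Summable fun n : ℕ => g n * T^n) (hT0 : 0 ≤ T) :
    ContinuousOn (fun t : ℝ => ∑' n : ℕ, g n * t^n) (Set.Icc (-T) T) := by
  refine continuousOn_tsum (fun n => (continuousOn_const.mul (continuous_pow n).continuousOn)) hT ?_
  intro n t ht
  rw [Real.norm_eq_abs, abs_mul, abs_of_nonneg (hg n), abs_pow]
  exact mul_le_mul_of_nonneg_left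
    (pow_le_pow_left₀ (abs_nonneg t) (abs_le.mpr ⟨ht.1, ht.2⟩) n) (hg n)

lemma contOn_mean (hpos : ∀ n, 0 ≤ a n) (ha0 : 0 < a 0)
    (hconv : ∀ t : ℝ, Summable fun n : ℕ => a n * t ^ n) {T : ℝ} (hT0 : 0 ≤ T) :
    ContinuousOn (meanK a) (Set.Icc 0 T) := by
  have hsub : Set.Icc (0:ℝ) T ⊆ Set.Icc (-T) T :=
    Set.Icc_subset_Icc (by linarith) le_rfl
  have h1 : ContinuousOn (fun t : ℝ => ∑' n : ℕ, (n:ℝ) * a n * t^n) (Set.Icc 0 T) :=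
    (contOn_tsum_pow (g := fun n => (n:ℝ) * a n)
      (fun n => mul_nonneg (Nat.cast_nonneg n) (hpos n)) (summable1 hpos hconv hT0) hT0).mono hsub
  have h0 : ContinuousOn (fun t : ℝ => ∑' n : ℕ, a n * t^n) (Set.Icc 0 T) :=
    (contOn_tsum_pow (g := a) hpos (hconv T) hT0).mono hsub
  exact h1.div h0 (fun t ht => (psum_pos hpos ha0 hconv ht.1).ne')

lemma mean_nonneg (hpos : ∀ n, 0 ≤ a n) {t : ℝ} (ht : 0 ≤ t) : 0 ≤ meanK a t := by
  apply div_nonneg _ (tsum_nonneg fun n => mul_nonneg (hpos n) (pow_nonneg ht n))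
  exact tsum_nonneg fun n =>
    mul_nonneg (mul_nonneg (Nat.cast_nonneg n) (hpos n)) (pow_nonneg ht n)

/-- an upper bound for the mean on `(0, T]`. -/
lemma mean_le (hpos : ∀ n, 0 ≤ a n) (ha0 : 0 < a 0)
    (hconv : ∀ t : ℝ, Summable fun n : ℕ => a n * t ^ n) {t T : ℝ} (ht : 0 ≤ t) (htT : t ≤ T) :
    meanK a t ≤ (∑' n : ℕ, (n:ℝ) * a n * T^n) / a 0 := by
  have hT0 : 0 ≤ T := ht.trans htT
  have h1 : (∑' n : ℕ, (n:ℝ) * a n * t^n) ≤ ∑' n : ℕ, (n:ℝ) * a n * T^n := by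
    refine Summable.tsum_le_tsum (fun n => ?_) (summable1 hpos hconv ht) (summable1 hpos hconv hT0)
    exact mul_le_mul_of_nonneg_left (pow_le_pow_left₀ ht htT n)
      (mul_nonneg (Nat.cast_nonneg n) (hpos n))
  have h2 : 0 ≤ ∑' n : ℕ, (n:ℝ) * a n * T^n :=
    tsum_nonneg fun n => mul_nonneg (mul_nonneg (Nat.cast_nonneg n) (hpos n)) (pow_nonneg hT0 n)
  exact div_le_div₀ h2 h1 ha0 (a0_le_psum hpos hconv ht)

/-- there are small `t > 0` with small mean. -/
lemma exists_small_mean (hpos : ∀ n, 0 ≤ a n) (ha0 : 0 < a 0)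
    (hconv : ∀ t : ℝ, Summable fun n : ℕ => a n * t ^ n) {c : ℝ} (hc : 0 < c) :
    ∃ t : ℝ, 0 < t ∧ meanK a t < c := by
  have hcont : ContinuousOn (fun t : ℝ => ∑' n : ℕ, (n:ℝ) * a n * t^n) (Set.Icc (-1) 1) :=
    contOn_tsum_pow (g := fun n => (n:ℝ) * a n)
      (fun n => mul_nonneg (Nat.cast_nonneg n) (hpos n))
      (summable1 hpos hconv zero_le_one) zero_le_one
  have hmem : (0:ℝ) ∈ Set.Icc (-1:ℝ) 1 := by constructor <;> norm_num
  have h0 : (∑' n : ℕ, (n:ℝ) * a n * (0:ℝ)^n) = 0 := by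
    have hz : ∀ n : ℕ, (n:ℝ) * a n * (0:ℝ)^n = (fun _ : ℕ => (0:ℝ)) n := by
      intro n
      cases n with
      | zero => simp
      | succ k => simp [zero_pow (Nat.succ_ne_zero k)]
    rw [tsum_congr hz, tsum_zero]
  have htend : Tendsto (fun t : ℝ => ∑' n : ℕ, (n:ℝ) * a n * t^n)
      (𝓝[Set.Icc (-1:ℝ) 1] 0) (𝓝 0) := by
    have := (hcont 0 hmem).tendsto
    rwa [h0] at this
  rw [Metric.tendsto_nhdsWithin_nhds] at htend
  obtain ⟨δ, hδ, hδ'⟩ := htend (c * a 0) (by positivity)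
  set t : ℝ := min (δ/2) 1 with htdef
  have ht0 : 0 < t := lt_min (by linarith) one_pos
  have ht1 : t ≤ 1 := min_le_right _ _
  have htI : t ∈ Set.Icc (-1:ℝ) 1 := ⟨by linarith, ht1⟩
  have htδ : dist t 0 < δ := by
    rw [Real.dist_eq, sub_zero, abs_of_pos ht0]
    calc t ≤ δ/2 := min_le_left _ _
      _ < δ := by linarith
  have hS1 := hδ' htI htδ
  rw [Real.dist_eq, sub_zero] at hS1
  have hS1' : (∑' n : ℕ, (n:ℝ) * a n * t^n) < c * a 0 := (le_abs_self _).trans_lt hS1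
  refine ⟨t, ht0, ?_⟩
  rw [meanK, div_lt_iff₀ (psum_pos hpos ha0 hconv ht0.le)]
  calc (∑' n : ℕ, (n:ℝ) * a n * t^n) < c * a 0 := hS1'
    _ ≤ c * ∑' n : ℕ, a n * t^n :=
      mul_le_mul_of_nonneg_left (a0_le_psum hpos hconv ht0.le) hc.le

/-- eventually (as `t → ∞`) the mean exceeds any `c < n` where `a n ≠ 0`. -/
lemma eventually_mean_gt (hpos : ∀ n, 0 ≤ a n) (ha0 : 0 < a 0)
    (hconv : ∀ t : ℝ, Summable fun n : ℕ => a n * t ^ n) {n : ℕ} (hn : a n ≠ 0)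
    {c : ℝ} (hcn : c < n) : ∀ᶠ t : ℝ in atTop, c < meanK a t := by
  have han : 0 < a n := (hpos n).lt_of_ne (Ne.symm hn)
  -- the polynomial part P t = ∑_{k<n} a k t^k
  set P : ℝ → ℝ := fun t => ∑ k ∈ Finset.range n, a k * t^k with hP
  have hPdiv : Tendsto (fun t : ℝ => P t / t^n) atTop (𝓝 0) := by
    have : ∀ t : ℝ, P t / t^n = ∑ k ∈ Finset.range n, a k * (t^k / t^n) := by
      intro t
      rw [hP, Finset.sum_div]
      exact Finset.sum_congr rfl fun k _ => by rw [mul_div_assoc]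
    simp only [this]
    have h0 : (0:ℝ) = ∑ k ∈ Finset.range n, (0:ℝ) := by simp
    rw [h0]
    refine tendsto_finset_sum _ fun k hk => ?_
    have := (tendsto_pow_div_pow_atTop_zero (Finset.mem_range.mp hk)).const_mul (a k)
    simpa using this
  have hφ : Tendsto (fun t : ℝ => (n:ℝ) - ((n:ℝ)/a n) * (P t / t^n)) atTop (𝓝 ((n:ℝ) - 0)) := by
    refine Tendsto.sub tendsto_const_nhds ?_
    have := hPdiv.const_mul ((n:ℝ)/a n)
    simpa using this
  rw [sub_zero] at hφ
  have hev : ∀ᶠ t : ℝ in atTop, c < (n:ℝ) - ((n:ℝ)/a n) * (P t / t^n) :=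
    hφ.eventually (eventually_gt_nhds hcn)
  filter_upwards [hev, eventually_gt_atTop (0:ℝ)] with t hφt ht0
  -- now show meanK a t ≥ the auxiliary function
  have hS := hconv t
  have hS1 := summable1 hpos hconv ht0.le
  have hSpos := psum_pos hpos ha0 hconv ht0.le
  have htn : 0 < t^n := pow_pos ht0 n
  have hant : 0 < a n * t^n := mul_pos han htn
  have hanle : a n * t^n ≤ ∑' k : ℕ, a k * t^k :=
    Summable.le_tsum hS n (fun j _ => mul_nonneg (hpos j) (pow_nonneg ht0.le j))
  -- tail bound : n * (S - P) ≤ S1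
  have htail : Summable fun j : ℕ => a (j + n) * t^(j+n) := (summable_nat_add_iff n).mpr hS
  have htail1 : Summable fun j : ℕ => ((j+n:ℕ):ℝ) * a (j + n) * t^(j+n) :=
    (summable_nat_add_iff n).mpr hS1
  have hsplit := Summable.sum_add_tsum_nat_add (f := fun k => a k * t^k) n hS
  have hsplit1 := Summable.sum_add_tsum_nat_add (f := fun k => (k:ℝ) * a k * t^k) n hS1
  have hkey : (n:ℝ) * ((∑' k : ℕ, a k * t^k) - P t) ≤ ∑' k : ℕ, (k:ℝ) * a k * t^k := by
    have htt : (∑' k : ℕ, a k * t^k) - P t = ∑' j : ℕ, a (j + n) * t^(j+n) := by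
      rw [hP]; linarith [hsplit]
    rw [htt, ← tsum_mul_left]
    have h1 : (∑' j : ℕ, (n:ℝ) * (a (j + n) * t^(j+n)))
        ≤ ∑' j : ℕ, ((j+n:ℕ):ℝ) * a (j + n) * t^(j+n) := by
      refine Summable.tsum_le_tsum (fun j => ?_) (htail.mul_left _) htail1
      have hjn : (n:ℝ) ≤ ((j+n:ℕ):ℝ) := by exact_mod_cast Nat.le_add_left n j
      calc (n:ℝ) * (a (j + n) * t^(j+n)) ≤ ((j+n:ℕ):ℝ) * (a (j + n) * t^(j+n)) :=
            mul_le_mul_of_nonneg_right hjn (mul_nonneg (hpos _) (pow_nonneg ht0.le _))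
        _ = ((j+n:ℕ):ℝ) * a (j + n) * t^(j+n) := by ring
    have h2 : (∑' j : ℕ, ((j+n:ℕ):ℝ) * a (j + n) * t^(j+n)) ≤ ∑' k : ℕ, (k:ℝ) * a k * t^k := by
      rw [← hsplit1]
      have : 0 ≤ ∑ k ∈ Finset.range n, (k:ℝ) * a k * t^k :=
        Finset.sum_nonneg fun k _ =>
          mul_nonneg (mul_nonneg (Nat.cast_nonneg k) (hpos k)) (pow_nonneg ht0.le k)
      linarith
    exact h1.trans h2
  have hPn : 0 ≤ P t := Finset.sum_nonneg fun k _ => mul_nonneg (hpos k) (pow_nonneg ht0.le k)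
  -- meanK a t ≥ n - (n/a n) * (P t / t^n)
  have hmean_ge : (n:ℝ) - ((n:ℝ)/a n) * (P t / t^n) ≤ meanK a t := by
    rw [meanK, le_div_iff₀ hSpos]
    have hfrac : ((n:ℝ)/a n) * (P t / t^n) * (∑' k : ℕ, a k * t^k)
        ≥ (n:ℝ) * P t := by
      have h3 : ((n:ℝ)/a n) * (P t / t^n) * (a n * t^n) = (n:ℝ) * P t := by
        field_simp
      calc ((n:ℝ)/a n) * (P t / t^n) * (∑' k : ℕ, a k * t^k)
          ≥ ((n:ℝ)/a n) * (P t / t^n) * (a n * t^n) := by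
            apply mul_le_mul_of_nonneg_left hanle
            positivity
        _ = (n:ℝ) * P t := h3
    nlinarith [hkey]
  linarith

/-- there is `t > 0` where the mean takes any prescribed value `c ∈ (0, n)`. -/
lemma exists_mean_eq (hpos : ∀ n, 0 ≤ a n) (ha0 : 0 < a 0)
    (hconv : ∀ t : ℝ, Summable fun n : ℕ => a n * t ^ n) {n : ℕ} (hn : a n ≠ 0)
    {c : ℝ} (hc0 : 0 < c) (hcn : c < n) :
    ∃ t : ℝ, 0 < t ∧ meanK a t = c := by
  obtain ⟨t₁, ht₁0, ht₁⟩ := exists_small_mean hpos ha0 hconv hc0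
  obtain ⟨t₂, ht₂1, ht₂⟩ :=
    ((eventually_mean_gt hpos ha0 hconv hn hcn).and (eventually_ge_atTop t₁)).exists
  have h12 : t₁ ≤ t₂ := ht₂
  have hcont : ContinuousOn (meanK a) (Set.Icc t₁ t₂) :=
    (contOn_mean hpos ha0 hconv (ht₁0.le.trans h12)).mono
      (Set.Icc_subset_Icc ht₁0.le le_rfl)
  have hmem : c ∈ Set.Icc (meanK a t₁) (meanK a t₂) := ⟨ht₁.le, ht₂1.le⟩
  obtain ⟨t, htI, ht⟩ := intermediate_value_Icc h12 hcont hmem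
  exact ⟨t, lt_of_lt_of_le ht₁0 htI.1, ht⟩

/-- variance bound at a point where the mean is the gap midpoint. -/
lemma var_ge (hpos : ∀ n, 0 ≤ a n) (ha0 : 0 < a 0)
    (hconv : ∀ t : ℝ, Summable fun n : ℕ => a n * t ^ n)
    {m n : ℕ} (hmn : m < n) (hgap : ∀ j, m < j → j < n → a j = 0)
    {t : ℝ} (ht : 0 < t) (hmean : meanK a t = ((m:ℝ) + n)/2) :
    ((n:ℝ) - m)^2/4 ≤ varK a t := by
  set c : ℝ := ((m:ℝ) + n)/2 with hc
  have hS := hconv t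
  have hS1 := summable1 hpos hconv ht.le
  have hS2 := summable2 hpos hconv ht.le
  have hSpos := psum_pos hpos ha0 hconv ht.le
  -- S1 = c * S
  have hS1c : (∑' k : ℕ, (k:ℝ) * a k * t^k) = c * ∑' k : ℕ, a k * t^k := by
    have := hmean
    rw [meanK] at this
    rw [div_eq_iff hSpos.ne'] at this
    exact this
  -- the quadratic combination
  have hQsum : Summable (fun k : ℕ => ((k:ℝ) - c)^2 * (a k * t^k)) := by
    have heq : (fun k : ℕ => ((k:ℝ) - c)^2 * (a k * t^k)) =
        fun k : ℕ => ((k:ℝ)^2 * a k * t^k - (2*c) * ((k:ℝ) * a k * t^k))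
          + c^2 * (a k * t^k) := by
      funext k; ring
    rw [heq]
    exact (hS2.sub (hS1.mul_left (2*c))).add (hS.mul_left (c^2))
  have hQval : (∑' k : ℕ, ((k:ℝ) - c)^2 * (a k * t^k)) =
      (∑' k : ℕ, (k:ℝ)^2 * a k * t^k) - (2*c) * (∑' k : ℕ, (k:ℝ) * a k * t^k)
        + c^2 * (∑' k : ℕ, a k * t^k) := by
    have heq : (fun k : ℕ => ((k:ℝ) - c)^2 * (a k * t^k)) =
        fun k : ℕ => ((k:ℝ)^2 * a k * t^k - (2*c) * ((k:ℝ) * a k * t^k))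
          + c^2 * (a k * t^k) := by
      funext k; ring
    rw [heq, Summable.tsum_add (hS2.sub (hS1.mul_left (2*c))) (hS.mul_left (c^2)),
      Summable.tsum_sub hS2 (hS1.mul_left (2*c)), tsum_mul_left, tsum_mul_left]
  -- termwise bound
  have hterm : ∀ k : ℕ, (((n:ℝ) - m)/2)^2 * (a k * t^k) ≤ ((k:ℝ) - c)^2 * (a k * t^k) := by
    intro k
    by_cases hk : a k = 0
    · simp [hk]
    · have hkout : k ≤ m ∨ n ≤ k := by
        rcases le_or_gt k m with h | h
        · exact Or.inl h
        · rcases le_or_gt n k with h' | h'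
          · exact Or.inr h'
          · exact absurd (hgap k h h') hk
      have hsq : (((n:ℝ) - m)/2)^2 ≤ ((k:ℝ) - c)^2 := by
        rcases hkout with h | h
        · have : (k:ℝ) ≤ m := Nat.cast_le.mpr h
          have hmn' : (m:ℝ) < n := Nat.cast_lt.mpr hmn
          nlinarith
        · have : (n:ℝ) ≤ k := Nat.cast_le.mpr h
          have hmn' : (m:ℝ) < n := Nat.cast_lt.mpr hmn
          nlinarith
      exact mul_le_mul_of_nonneg_right hsq (mul_nonneg (hpos k) (pow_nonneg ht.le k))
  have hmain : (((n:ℝ) - m)/2)^2 * (∑' k : ℕ, a k * t^k)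
      ≤ ∑' k : ℕ, ((k:ℝ) - c)^2 * (a k * t^k) := by
    rw [← tsum_mul_left]
    exact Summable.tsum_le_tsum hterm (hS.mul_left _) hQsum
  rw [hQval, hS1c] at hmain
  -- conclude
  rw [varK, hmean]
  have h2 : (((n:ℝ) - m)/2)^2 + c^2
      ≤ (∑' k : ℕ, (k:ℝ)^2 * a k * t^k) / (∑' k : ℕ, a k * t^k) := by
    rw [le_div_iff₀ hSpos]
    nlinarith [hmain]
  have h3 : (((n:ℝ) - m)/2)^2 = ((n:ℝ) - m)^2/4 := by ring
  linarith

lemma key (hpos : ∀ n, 0 ≤ a n) (ha0 : 0 < a 0)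
    (hconv : ∀ t : ℝ, Summable fun n : ℕ => a n * t ^ n)
    {m n : ℕ} (hmn : m < n) (hn : a n ≠ 0)
    (hgap : ∀ j, m < j → j < n → a j = 0) :
    ∃ t : ℝ, 0 < t ∧ meanK a t = ((m:ℝ)+n)/2 ∧ ((n:ℝ)-m)^2/4 ≤ varK a t := by
  have hn0 : (0:ℝ) < n := by exact_mod_cast Nat.zero_lt_of_lt hmn
  have hm0 : (0:ℝ) ≤ m := Nat.cast_nonneg m
  have hc0 : (0:ℝ) < ((m:ℝ)+n)/2 := by linarith
  have hcn : ((m:ℝ)+n)/2 < n := by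
    have : (m:ℝ) < n := Nat.cast_lt.mpr hmn
    linarith
  obtain ⟨t, ht0, hmean⟩ := exists_mean_eq hpos ha0 hconv hn hc0 hcn
  exact ⟨t, ht0, hmean, var_ge hpos ha0 hconv hmn hgap ht0 hmean⟩

end Stmt1Aux

open Stmt1Aux

/-- Boïchuk–Gol'dberg, Theorem 1.2.3. For `f ∈ K` entire,
`sup_{t>0} σ_f²(t) ≥ gap(f)²/4 (≥ 1/4)`, and if `f` is transcendental,
`limsup_{t→∞} σ_f²(t) ≥ gap̄(f)²/4 (≥ 1/4)`.  Here `gap(f)` is the supremum of differences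
of consecutive nonzero-coefficient indices, and `gap̄(f)` its limsup; the statements are
expressed through realized consecutive gaps, with values taken in `EReal`. -/
theorem statement1 (a : ℕ → ℝ)
    (hpos : ∀ n, 0 ≤ a n) (ha0 : 0 < a 0) (ha1 : ∃ n, 1 ≤ n ∧ 0 < a n)
    (hconv : ∀ t : ℝ, Summable fun n : ℕ => a n * t ^ n) :
    ((∀ m n : ℕ, m < n → a m ≠ 0 → a n ≠ 0 → (∀ j, m < j → j < n → a j = 0) →
        ((((n : ℝ) - (m : ℝ)) ^ 2 / 4 : ℝ) : EReal) ≤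
          ⨆ t : Set.Ioi (0 : ℝ), (varK a t.1 : EReal)) ∧
      (((1 / 4 : ℝ) : EReal) ≤ ⨆ t : Set.Ioi (0 : ℝ), (varK a t.1 : EReal))) ∧
    ((¬ ∃ N : ℕ, ∀ n, N < n → a n = 0) →
      (∀ G : ℕ,
        (∀ N : ℕ, ∃ m n : ℕ, N ≤ m ∧ m < n ∧ a m ≠ 0 ∧ a n ≠ 0 ∧
            (∀ j, m < j → j < n → a j = 0) ∧ G ≤ n - m) →
        (((G : ℝ) ^ 2 / 4 : ℝ) : EReal) ≤
          Filter.limsup (fun t : ℝ => (varK a t : EReal)) atTop) ∧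
      (((1 / 4 : ℝ) : EReal) ≤ Filter.limsup (fun t : ℝ => (varK a t : EReal)) atTop)) := by
  classical
  have hsup : ∀ m n : ℕ, m < n → a m ≠ 0 → a n ≠ 0 → (∀ j, m < j → j < n → a j = 0) →
      ((((n : ℝ) - (m : ℝ)) ^ 2 / 4 : ℝ) : EReal) ≤
        ⨆ t : Set.Ioi (0 : ℝ), (varK a t.1 : EReal) := by
    intro m n hmn hm hn hgap
    obtain ⟨t, ht0, _, hvar⟩ := key hpos ha0 hconv hmn hn hgap
    calc ((((n : ℝ) - (m : ℝ)) ^ 2 / 4 : ℝ) : EReal) ≤ ((varK a t : ℝ) : EReal) :=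
        EReal.coe_le_coe_iff.mpr hvar
      _ ≤ _ := le_iSup (fun s : Set.Ioi (0:ℝ) => (varK a s.1 : EReal)) ⟨t, Set.mem_Ioi.mpr ht0⟩
  have hlim : ∀ G : ℕ, (∀ N : ℕ, ∃ m n : ℕ, N ≤ m ∧ m < n ∧ a m ≠ 0 ∧ a n ≠ 0 ∧
        (∀ j, m < j → j < n → a j = 0) ∧ G ≤ n - m) →
      (((G : ℝ) ^ 2 / 4 : ℝ) : EReal) ≤
        Filter.limsup (fun t : ℝ => (varK a t : EReal)) atTop := by
    intro G hG
    refine Filter.le_limsup_of_frequently_le' ?_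
    rw [Filter.frequently_atTop]
    intro T
    set T' : ℝ := max T 1 with hT'
    set B : ℝ := (∑' k : ℕ, (k:ℝ) * a k * T'^k) / a 0 with hB
    obtain ⟨m, n, hNm, hmn, hm, hn, hgap, hGnm⟩ := hG (⌈B⌉₊ + 1)
    obtain ⟨t, ht0, hmean, hvar⟩ := key hpos ha0 hconv hmn hn hgap
    have hmB : B < m := by
      have h1 : B ≤ (⌈B⌉₊ : ℝ) := Nat.le_ceil B
      have h2 : ((⌈B⌉₊ + 1 : ℕ) : ℝ) ≤ m := Nat.cast_le.mpr hNm
      push_cast at h2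
      linarith
    have hmean_gt : B < meanK a t := by
      rw [hmean]
      have h3 : (m:ℝ) < n := Nat.cast_lt.mpr hmn
      linarith
    have htT : T < t := by
      by_contra hcon
      push_neg at hcon
      have := mean_le hpos ha0 hconv ht0.le (hcon.trans (le_max_left T 1))
      rw [← hB] at this
      linarith
    refine ⟨t, htT.le, ?_⟩
    have hGle : (G:ℝ) ≤ (n:ℝ) - m := by
      have hGm : G + m ≤ n := by omega
      have h2 : ((G + m : ℕ):ℝ) ≤ (n:ℝ) := Nat.cast_le.mpr hGm
      push_cast at h2
      linarith
    refine EReal.coe_le_coe_iff.mpr ?_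
    have h1 : (G:ℝ)^2 ≤ ((n:ℝ)-m)^2 := pow_le_pow_left₀ (Nat.cast_nonneg G) hGle 2
    linarith
  refine ⟨⟨hsup, ?_⟩, fun hnp => ⟨hlim, ?_⟩⟩
  · obtain ⟨n₁, hn₁1, hn₁⟩ := ha1
    have hP : ∃ k, 0 < k ∧ a k ≠ 0 := ⟨n₁, hn₁1, hn₁.ne'⟩
    obtain ⟨hn₀pos, hn₀ne⟩ := Nat.find_spec hP
    have hgap : ∀ j, 0 < j → j < Nat.find hP → a j = 0 := by
      intro j hj hjn
      by_contra hja
      exact Nat.find_min hP hjn ⟨hj, hja⟩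
    have hs := hsup 0 (Nat.find hP) hn₀pos ha0.ne' hn₀ne hgap
    refine le_trans (EReal.coe_le_coe_iff.mpr ?_) hs
    have h1 : (1:ℝ) ≤ (Nat.find hP : ℝ) := by exact_mod_cast hn₀pos
    nlinarith
  · push_neg at hnp
    have h1 : ∀ N : ℕ, ∃ m n : ℕ, N ≤ m ∧ m < n ∧ a m ≠ 0 ∧ a n ≠ 0 ∧
        (∀ j, m < j → j < n → a j = 0) ∧ 1 ≤ n - m := by
      intro N
      obtain ⟨m, hNm, hm⟩ := hnp N
      have hP : ∃ k, m < k ∧ a k ≠ 0 := hnp m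
      obtain ⟨hmn, hnne⟩ := Nat.find_spec hP
      refine ⟨m, Nat.find hP, hNm.le, hmn, hm, hnne, ?_, by omega⟩
      intro j hj hjn
      by_contra hja
      exact Nat.find_min hP hjn ⟨hj, hja⟩
    have h2 := hlim 1 h1
    refine le_trans (le_of_eq ?_) h2
    norm_num
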